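/- If m = q/p is a rational Herglotz–Nevanlinna function with q, p coprime real polynomials and deg p = deg q + 1, then m_0 := −p/q is also a Herglotz–Nevanlinna function, and there exists l_0 > 0 and a rational Herglotz–Nevanlinna function m̃_0 bounded near ∞ such that m_0(z) = l_0 z + m̃_0(z). -/

import Mathlib

open Polynomial

noncomputable section

/-- A Herglotz–Nevanlinna function: analytic off the real line, maps the open upper
half-plane into the closed upper half-plane, symmetry `f(z*) = f(z)*`. -/
def IsHerglotz (f : ℂ → ℂ) : Prop :=
  (∀ z : ℂ, z.im ≠ 0 → DifferentiableAt ℂ f z) ∧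
  (∀ z : ℂ, 0 < z.im → 0 ≤ (f z).im) ∧
  (∀ z : ℂ, z.im ≠ 0 → f ((starRingEnd ℂ) z) = (starRingEnd ℂ) (f z))

lemma aux_diff (f : ℝ[X]) : Differentiable ℂ fun z : ℂ => aeval z f := by
  have : (fun z : ℂ => aeval z f) = fun z => (f.map (algebraMap ℝ ℂ)).eval z := by
    funext z; rw [eval_map, aeval_def]
  rw [this]
  exact (f.map (algebraMap ℝ ℂ)).differentiable

lemma aux_cont (f : ℝ[X]) : Continuous fun z : ℂ => aeval z f :=
  (aux_diff f).continuous

lemma aux_min {f : ℂ → ℂ} {z₀ : ℂ} {U : Set ℂ} (hU : U ∈ nhds z₀) (hf : AnalyticAt ℂ f z₀)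
    (hmin : ∀ z ∈ U, (f z₀).im ≤ (f z).im) : ∀ᶠ z in nhds z₀, f z = f z₀ := by
  rcases hf.eventually_constant_or_nhds_le_map_nhds with h | h
  · exact h
  · exfalso
    have hmem : {w : ℂ | (f z₀).im ≤ w.im} ∈ Filter.map f (nhds z₀) :=
      Filter.mem_map.2 (Filter.mem_of_superset hU fun z hz => hmin z hz)
    have h2 : {w : ℂ | (f z₀).im ≤ w.im} ∈ nhds (f z₀) := h hmem
    rcases Metric.mem_nhds_iff.1 h2 with ⟨ε, hε, hball⟩
    have hmemb : f z₀ - (↑(ε/2) : ℂ) * Complex.I ∈ Metric.ball (f z₀) ε := by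
      simp only [Metric.mem_ball, dist_eq_norm, sub_sub_cancel_left, norm_neg]
      rw [norm_mul, Complex.norm_I, mul_one, Complex.norm_real]
      rw [Real.norm_eq_abs, abs_of_pos (by linarith)]; linarith
    have := hball hmemb
    simp only [Set.mem_setOf_eq, Complex.sub_im, Complex.mul_im, Complex.I_im,
      Complex.ofReal_re, Complex.I_re, Complex.ofReal_im, mul_one, mul_zero, add_zero, zero_mul,
      zero_sub, sub_neg_eq_add] at this
    linarith

lemma aux_evcomap {P : ℂ → Prop} (h : ∀ᶠ z in Filter.comap (fun z : ℂ => ‖z‖) Filter.atTop, P z) :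
    ∃ R : ℝ, ∀ z : ℂ, R ≤ ‖z‖ → P z := by
  rw [Filter.eventually_comap] at h
  rcases Filter.eventually_atTop.1 h with ⟨R, hR⟩
  exact ⟨R, fun z hz => hR ‖z‖ hz z rfl⟩

lemma aux_tendsto (f : ℝ[X]) (n : ℕ) (hf : f.natDegree ≤ n) :
    Filter.Tendsto (fun z : ℂ => aeval z f / z ^ n) (Filter.comap (fun z : ℂ => ‖z‖) Filter.atTop)
      (nhds ((f.coeff n : ℂ))) := by
  set F := Filter.comap (fun z : ℂ => ‖z‖) (Filter.atTop : Filter ℝ) with hF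
  have h1 : Filter.Tendsto (fun z : ℂ => z⁻¹) F (nhds 0) := by
    rw [tendsto_zero_iff_norm_tendsto_zero]
    simp only [norm_inv]
    exact tendsto_inv_atTop_zero.comp Filter.tendsto_comap
  set g : ℂ → ℂ := fun w => ∑ i ∈ Finset.range (n+1), (f.coeff i : ℂ) * w ^ (n - i) with hg
  have hgc : Continuous g := by
    apply continuous_finset_sum
    intro i _
    exact continuous_const.mul (continuous_pow _)
  have hg0 : g 0 = (f.coeff n : ℂ) := by
    simp only [hg]
    rw [Finset.sum_eq_single n]
    · simp
    · intro i hi hne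
      have : n - i ≠ 0 := by
        have := Finset.mem_range.1 hi
        omega
      simp [this]
    · intro h; exact absurd (Finset.self_mem_range_succ n) h
  have key : ∀ z : ℂ, z ≠ 0 → aeval z f / z ^ n = g z⁻¹ := by
    intro z hz
    rw [Polynomial.aeval_eq_sum_range' (lt_of_le_of_lt hf (Nat.lt_succ_self n)), hg,
      Finset.sum_div]
    apply Finset.sum_congr rfl
    intro i hi
    have hin : i ≤ n := Nat.lt_succ_iff.mp (Finset.mem_range.1 hi)
    rw [Complex.real_smul, inv_pow, div_eq_iff (pow_ne_zero n hz), mul_assoc]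
    congr 1
    rw [inv_mul_eq_div, eq_div_iff (pow_ne_zero _ hz), ← pow_add]
    congr 1
    omega
  have h2 : Filter.Tendsto (fun z : ℂ => g z⁻¹) F (nhds (f.coeff n : ℂ)) := by
    rw [← hg0]
    exact (hgc.tendsto 0).comp h1
  apply h2.congr'
  have hev : ∀ᶠ z : ℂ in F, z ≠ 0 := by
    rw [hF, Filter.eventually_comap]
    filter_upwards [Filter.eventually_ge_atTop 1] with b hb z hz
    intro h0; rw [h0] at hz; simp at hz; linarith
  filter_upwards [hev] with z hz
  exact (key z hz).symm

set_option maxHeartbeats 2000000 in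
/-- If `m = q/p` is a rational Herglotz–Nevanlinna function with `q, p` coprime real
polynomials and `deg p = deg q + 1`, then `m_0 := −p/q` is again a Herglotz–Nevanlinna
function and there exist `l_0 > 0` and a rational Herglotz–Nevanlinna function `m̃_0`
bounded near `∞` such that `m_0(z) = l_0 z + m̃_0(z)`. -/
theorem euclid_step_herglotz (m : ℂ → ℂ) (hHN : IsHerglotz m)
    (p q : ℝ[X]) (hcop : IsCoprime p q) (hdeg : p.degree = q.degree + 1)
    (hm : ∀ z : ℂ, z.im ≠ 0 → m z = aeval z q / aeval z p) :
    IsHerglotz (fun z => -(aeval z p) / aeval z q) ∧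
    ∃ l₀ : ℝ, 0 < l₀ ∧ ∃ mt : ℂ → ℂ, IsHerglotz mt ∧
      (∃ p' q' : ℝ[X], ∀ z : ℂ, z.im ≠ 0 → mt z = aeval z q' / aeval z p') ∧
      (∃ C R : ℝ, ∀ z : ℂ, z.im ≠ 0 → R < ‖z‖ → ‖mt z‖ ≤ C) ∧
      ∀ z : ℂ, z.im ≠ 0 → -(aeval z p) / aeval z q = (l₀ : ℂ) * z + mt z := by
  obtain ⟨hdiffm, himm, hsymm⟩ := hHN
  have hq0 : q ≠ 0 := by
    intro h
    rw [h, Polynomial.degree_zero, WithBot.bot_add] at hdeg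
    rw [h, Polynomial.degree_eq_bot.1 hdeg] at hcop
    exact not_isCoprime_zero_zero hcop
  obtain ⟨n, hn⟩ : ∃ x : ℕ, x = q.natDegree := ⟨_, rfl⟩
  have hdegp : p.natDegree = n + 1 := by
    apply Polynomial.natDegree_eq_of_degree_eq_some
    rw [hdeg, Polynomial.degree_eq_natDegree hq0, hn]
    norm_cast
  have hp0 : p ≠ 0 := by intro h; simp [h] at hdegp
  have hlq : q.leadingCoeff ≠ 0 := Polynomial.leadingCoeff_ne_zero.2 hq0
  have hlp : p.leadingCoeff ≠ 0 := Polynomial.leadingCoeff_ne_zero.2 hp0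
  -- q has no zeros off the real line
  have hQne : ∀ z : ℂ, z.im ≠ 0 → aeval z q ≠ 0 := by
    suffices hup : ∀ z : ℂ, 0 < z.im → aeval z q ≠ 0 by
      intro z hz
      rcases hz.lt_or_gt with hneg | hpos
      · intro h0
        apply hup (starRingEnd ℂ z) (by simpa using hneg)
        rw [Polynomial.aeval_conj, h0, map_zero]
      · exact hup z hpos
    intro z₀ hz₀ h0
    obtain ⟨a, b, hab⟩ := hcop
    have hP0 : aeval z₀ p ≠ 0 := by
      intro hp'
      have h1 := congrArg (aeval z₀) hab
      simp only [map_add, map_mul, map_one, hp', h0, mul_zero, zero_add, add_zero] at h1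
      exact zero_ne_one h1
    have hz₀ne : z₀.im ≠ 0 := ne_of_gt hz₀
    have hmz₀ : m z₀ = 0 := by rw [hm z₀ hz₀ne, h0, zero_div]
    have hopenim : IsOpen {z : ℂ | z.im ≠ 0} :=
      IsOpen.preimage Complex.continuous_im isOpen_ne
    have hA : AnalyticAt ℂ m z₀ := by
      apply DifferentiableOn.analyticAt (s := {z : ℂ | z.im ≠ 0})
      · exact fun z hz => (hdiffm z hz).differentiableWithinAt
      · exact hopenim.mem_nhds hz₀ne
    have hUnh : {z : ℂ | 0 < z.im} ∈ nhds z₀ :=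
      (isOpen_lt continuous_const Complex.continuous_im).mem_nhds hz₀
    have hev := aux_min hUnh hA (fun z hz => by rw [hmz₀]; simpa using himm z hz)
    have hevP : ∀ᶠ z in nhds z₀, aeval z p ≠ 0 :=
      (aux_cont p).continuousAt.eventually_ne hP0
    have hevI : ∀ᶠ z in nhds z₀, z.im ≠ 0 := hopenim.mem_nhds hz₀ne
    have hevQ : (fun w : ℂ => aeval w q) =ᶠ[nhds z₀] 0 := by
      filter_upwards [hev, hevP, hevI] with z h1 h2 h3
      have h4 := hm z h3
      rw [h1, hmz₀] at h4
      have := div_eq_zero_iff.1 h4.symm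
      simpa [h2] using this
    have hAOn : AnalyticOnNhd ℂ (fun w : ℂ => aeval w q) Set.univ :=
      fun z _ => ((aux_diff q).analyticAt z)
    have hzero := hAOn.eqOn_zero_of_preconnected_of_eventuallyEq_zero
      isPreconnected_univ (Set.mem_univ z₀) hevQ
    have hmap : q.map (algebraMap ℝ ℂ) = 0 := by
      apply Polynomial.funext
      intro z
      have := hzero (Set.mem_univ z)
      simpa [eval_map, ← aeval_def] using this
    have : q = 0 := by
      have hinj : Function.Injective (algebraMap ℝ ℂ) := Complex.ofReal_injective
      exact Polynomial.map_injective _ hinj (by simpa using hmap)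
    exact hq0 this
  -- imaginary part of -p/q on the upper half plane
  have him0 : ∀ z : ℂ, 0 < z.im → 0 ≤ (-(aeval z p) / aeval z q).im := by
    intro z hz
    have hQ := hQne z (ne_of_gt hz)
    by_cases hP : aeval z p = 0
    · simp [hP]
    · have hmz : m z = aeval z q / aeval z p := hm z (ne_of_gt hz)
      have h1 : -(aeval z p) / aeval z q = -(m z)⁻¹ := by
        rw [hmz, inv_div, neg_div]
      rw [h1]
      have h2 : (-(m z)⁻¹).im = (m z).im / Complex.normSq (m z) := by
        simp [Complex.inv_im, neg_div]
      rw [h2]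
      exact div_nonneg (himm z hz) (Complex.normSq_nonneg _)
  have hsym0 : ∀ z : ℂ,
      -(aeval ((starRingEnd ℂ) z) p) / aeval ((starRingEnd ℂ) z) q
        = (starRingEnd ℂ) (-(aeval z p) / aeval z q) := by
    intro z
    rw [Polynomial.aeval_conj, Polynomial.aeval_conj, ← map_neg, ← map_div₀]
  have hdiff0 : ∀ z : ℂ, z.im ≠ 0 →
      DifferentiableAt ℂ (fun z => -(aeval z p) / aeval z q) z := by
    intro z hz
    exact ((aux_diff p z).neg).div (aux_diff q z) (hQne z hz)
  -- the data
  obtain ⟨l₀, hl₀⟩ : ∃ x : ℝ, x = -(p.leadingCoeff / q.leadingCoeff) := ⟨_, rfl⟩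
  have hl0ne : l₀ ≠ 0 := by
    rw [hl₀]
    exact neg_ne_zero.2 (div_ne_zero hlp hlq)
  obtain ⟨q', hq'⟩ : ∃ f : ℝ[X], f = -(p + C l₀ * (X * q)) := ⟨_, rfl⟩
  have hq'eval : ∀ z : ℂ, aeval z q' = -(aeval z p) - (l₀ : ℂ) * (z * aeval z q) := by
    intro z
    simp only [hq', map_neg, map_add, map_mul, aeval_C, aeval_X, Complex.coe_algebraMap]
    ring
  obtain ⟨mt, hmt⟩ : ∃ f : ℂ → ℂ, f = fun z => aeval z q' / aeval z q := ⟨_, rfl⟩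
  have halg : ∀ z : ℂ, aeval z q ≠ 0 → mt z = -(aeval z p) / aeval z q - (l₀ : ℂ) * z := by
    intro z hQ
    rw [hmt]
    simp only
    rw [hq'eval]
    field_simp
  have hq'deg : q'.natDegree ≤ n := by
    apply Polynomial.natDegree_le_iff_coeff_eq_zero.2
    intro N hN
    obtain ⟨M, rfl⟩ : ∃ M, N = M + 1 := ⟨N - 1, by omega⟩
    have hco : q'.coeff (M + 1) = -(p.coeff (M + 1) + l₀ * q.coeff M) := by
      simp [hq', Polynomial.coeff_X_mul]
    rw [hco]
    by_cases hM : M = n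
    · rw [hM]
      rw [show p.coeff (n + 1) = p.leadingCoeff by rw [← hdegp]; exact Polynomial.coeff_natDegree,
        show q.coeff n = q.leadingCoeff by rw [hn]; exact Polynomial.coeff_natDegree]
      rw [hl₀]
      field_simp
      ring
    · have h1 : p.coeff (M + 1) = 0 :=
        Polynomial.coeff_eq_zero_of_natDegree_lt (by omega)
      have h2 : q.coeff M = 0 :=
        Polynomial.coeff_eq_zero_of_natDegree_lt (by omega)
      simp [h1, h2]
  -- the limit at infinity
  have hcnr : q.coeff n ≠ 0 := by
    rw [hn, Polynomial.coeff_natDegree]; exact hlq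
  have hcn : (q.coeff n : ℂ) ≠ 0 := by exact_mod_cast hcnr
  obtain ⟨L, hL⟩ : ∃ x : ℝ, x = q'.coeff n / q.coeff n := ⟨_, rfl⟩
  have htends : Filter.Tendsto mt (Filter.comap (fun z : ℂ => ‖z‖) Filter.atTop)
      (nhds ((L : ℝ) : ℂ)) := by
    have h1 := (aux_tendsto q' n hq'deg).div (aux_tendsto q n (le_of_eq hn.symm)) hcn
    have h2 : (((q'.coeff n : ℝ) : ℂ) / ((q.coeff n : ℝ) : ℂ)) = ((L : ℝ) : ℂ) := by
      rw [hL]; push_cast; ring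
    rw [h2] at h1
    apply h1.congr'
    have hev : ∀ᶠ z : ℂ in Filter.comap (fun z : ℂ => ‖z‖) Filter.atTop, z ≠ 0 := by
      rw [Filter.eventually_comap]
      filter_upwards [Filter.eventually_ge_atTop 1] with b hb z hz
      intro h0; rw [h0] at hz; simp at hz; linarith
    filter_upwards [hev] with z hz
    have hzn : z ^ n ≠ 0 := pow_ne_zero n hz
    rw [hmt]
    simp only
    by_cases hQ : aeval z q = 0
    · simp [hQ]
    · rw [Pi.div_apply]
      field_simp
  -- positivity of l₀
  obtain ⟨R₀, hR₀⟩ := aux_evcomap (htends.eventually (Metric.ball_mem_nhds _ one_pos))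
  have himb : ∀ (r : ℝ) (hr : 0 < r), ∀ z : ℂ, r ≤ ‖z‖ →
      Metric.ball ((L : ℝ) : ℂ) r = Metric.ball ((L : ℝ) : ℂ) r := fun _ _ _ _ => rfl
  have hl0pos : 0 < l₀ := by
    rcases hl0ne.lt_or_gt with hneg | hpos
    · exfalso
      obtain ⟨y, hy⟩ : ∃ x : ℝ, x = max (R₀ + 1) ((|L| + 2) / (-l₀)) := ⟨_, rfl⟩
      have hypos : 0 < y := by
        rw [hy]
        exact lt_of_lt_of_le (div_pos (by positivity) (by linarith)) (le_max_right _ _)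
      obtain ⟨z, hz⟩ : ∃ w : ℂ, w = (y : ℂ) * Complex.I := ⟨_, rfl⟩
      have hzim : z.im = y := by simp [hz]
      have hznorm : ‖z‖ = y := by
        rw [hz, norm_mul, Complex.norm_I, mul_one, Complex.norm_real,
          Real.norm_eq_abs, abs_of_pos hypos]
      have hR : R₀ ≤ ‖z‖ := by
        rw [hznorm, hy]
        exact le_trans (by linarith) (le_max_left (R₀+1) ((|L| + 2) / (-l₀)))
      have hdist := hR₀ z hR
      rw [dist_eq_norm] at hdist
      have himmt : |(mt z).im| < 1 := by
        calc |(mt z).im| = |(mt z - ((L : ℝ) : ℂ)).im| := by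
              simp [Complex.sub_im, Complex.ofReal_im]
          _ ≤ ‖mt z - ((L : ℝ) : ℂ)‖ := Complex.abs_im_le_norm _
          _ < 1 := by exact hdist
      have hQz := hQne z (by rw [hzim]; exact ne_of_gt hypos)
      have h5 := him0 z (by rw [hzim]; exact hypos)
      have h6 := halg z hQz
      have h7 : (-(aeval z p) / aeval z q).im = (mt z).im + l₀ * y := by
        have : -(aeval z p) / aeval z q = mt z + (l₀ : ℂ) * z := by rw [h6]; ring
        rw [this]
        simp [Complex.add_im, Complex.mul_im, hzim]
      rw [h7] at h5
      have h8 : l₀ * y ≤ l₀ * ((|L| + 2) / (-l₀)) := by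
        apply mul_le_mul_of_nonpos_left _ (le_of_lt hneg)
        · rw [hy]; exact le_max_right _ _
      have h9 : l₀ * ((|L| + 2) / (-l₀)) = -(|L| + 2) := by
        rw [div_neg, mul_neg, mul_div_assoc', mul_div_cancel_left₀ _ hl0ne]
      have habs : 0 ≤ |L| := abs_nonneg L
      have h10 : l₀ * y ≤ -(|L| + 2) := le_of_le_of_eq h8 h9
      have h11 : (mt z).im < 1 := (abs_lt.1 himmt).2
      nlinarith [h5, h10, h11, habs]
    · exact hpos
  -- lower bound for the imaginary part of mt
  have hlow : ∀ z : ℂ, 0 < z.im → -(l₀ * z.im) ≤ (mt z).im := by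
    intro z hz
    have hQ := hQne z (ne_of_gt hz)
    have h2 : (mt z).im = (-(aeval z p) / aeval z q).im - l₀ * z.im := by
      rw [halg z hQ]
      simp [Complex.sub_im, Complex.mul_im]
    rw [h2]
    have := him0 z hz
    linarith
  -- nonnegativity of the imaginary part of mt on the upper half plane
  have himmt : ∀ z : ℂ, 0 < z.im → 0 ≤ (mt z).im := by
    by_contra hcon
    push_neg at hcon
    obtain ⟨z₀, hz₀, hneg⟩ := hcon
    obtain ⟨a, ha⟩ : ∃ x : ℝ, x = -(mt z₀).im := ⟨_, rfl⟩
    have ha0 : 0 < a := by rw [ha]; linarith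
    have hmtz₀ : (mt z₀).im = -a := by rw [ha]; ring
    obtain ⟨R₁, hR₁⟩ := aux_evcomap (htends.eventually
      (Metric.ball_mem_nhds _ (show (0:ℝ) < a/4 by linarith)))
    have hfar : ∀ z : ℂ, R₁ ≤ ‖z‖ → |(mt z).im| < a / 4 := by
      intro z hzn
      have hd := hR₁ z hzn
      rw [dist_eq_norm] at hd
      calc |(mt z).im| = |(mt z - ((L : ℝ) : ℂ)).im| := by
            simp [Complex.sub_im, Complex.ofReal_im]
        _ ≤ ‖mt z - ((L : ℝ) : ℂ)‖ := Complex.abs_im_le_norm _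
        _ < a / 4 := by exact hd
    obtain ⟨c, hc⟩ : ∃ x : ℝ, x = a / (2 * l₀) := ⟨_, rfl⟩
    have hc0 : 0 < c := by rw [hc]; exact div_pos ha0 (by linarith)
    have hz₀a : a ≤ l₀ * z₀.im := by
      have := hlow z₀ hz₀
      rw [hmtz₀] at this
      linarith
    have hz₀c : c ≤ z₀.im := by
      rw [hc, div_le_iff₀ (by linarith : (0:ℝ) < 2 * l₀)]
      nlinarith
    have hz₀R : ‖z₀‖ ≤ R₁ := by
      by_contra hcon2
      push_neg at hcon2
      have := hfar z₀ (le_of_lt hcon2)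
      rw [hmtz₀, abs_neg, abs_of_pos ha0] at this
      linarith
    obtain ⟨Fq, hFq⟩ : ∃ F : ℂ → ℝ, F = fun z =>
      (aeval z q' * (starRingEnd ℂ) (aeval z q)).im + (a/2) * Complex.normSq (aeval z q) :=
      ⟨_, rfl⟩
    have hFqcont : Continuous Fq := by
      rw [hFq]
      apply Continuous.add
      · exact Complex.continuous_im.comp
          ((aux_cont q').mul (Complex.continuous_conj.comp (aux_cont q)))
      · exact continuous_const.mul (Complex.continuous_normSq.comp (aux_cont q))
    have him_eq : ∀ z : ℂ, aeval z q ≠ 0 →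
        (mt z).im = (aeval z q' * (starRingEnd ℂ) (aeval z q)).im
          / Complex.normSq (aeval z q) := by
      intro z h
      rw [hmt]
      simp only
      rw [Complex.div_im, Complex.mul_im, Complex.conj_re, Complex.conj_im]
      ring
    have hiff : ∀ z : ℂ, aeval z q ≠ 0 → ((mt z).im ≤ -(a/2) ↔ Fq z ≤ 0) := by
      intro z h
      have hns : 0 < Complex.normSq (aeval z q) := Complex.normSq_pos.2 h
      rw [him_eq z h, hFq]
      simp only
      rw [div_le_iff₀ hns]
      constructor <;> intro hh <;> nlinarith
    obtain ⟨K, hK⟩ : ∃ S : Set ℂ,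
        S = Metric.closedBall 0 R₁ ∩ ({z : ℂ | c ≤ z.im} ∩ {z : ℂ | Fq z ≤ 0}) := ⟨_, rfl⟩
    have hKcomp : IsCompact K := by
      rw [hK]
      exact (isCompact_closedBall 0 R₁).inter_right
        ((isClosed_le continuous_const Complex.continuous_im).inter
          (isClosed_le hFqcont continuous_const))
    have hKim : ∀ z ∈ K, 0 < z.im := by
      intro z hzK
      rw [hK] at hzK
      exact lt_of_lt_of_le hc0 hzK.2.1
    have hKq : ∀ z ∈ K, aeval z q ≠ 0 := fun z hzK => hQne z (ne_of_gt (hKim z hzK))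
    have hz₀K : z₀ ∈ K := by
      rw [hK]
      refine ⟨?_, hz₀c, ?_⟩
      · rw [Metric.mem_closedBall, dist_zero_right]; exact hz₀R
      · exact (hiff z₀ (hQne z₀ (ne_of_gt hz₀))).1 (by rw [hmtz₀]; linarith)
    have hContOn : ContinuousOn (fun z => (mt z).im) K := by
      rw [hmt]
      intro z hzK
      apply ContinuousAt.continuousWithinAt
      exact Complex.continuous_im.continuousAt.comp
        (((aux_cont q').continuousAt).div ((aux_cont q).continuousAt) (hKq z hzK))
    obtain ⟨z₁, hz₁K, hz₁min⟩ := hKcomp.exists_isMinOn ⟨z₀, hz₀K⟩ hContOn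
    have hz₁pos : 0 < z₁.im := hKim z₁ hz₁K
    have hmin₀ : (mt z₁).im ≤ -a := by
      have := isMinOn_iff.1 hz₁min z₀ hz₀K
      rw [hmtz₀] at this
      exact this
    have hglob : ∀ z : ℂ, 0 < z.im → (mt z₁).im ≤ (mt z).im := by
      intro z hz
      by_cases hzK : z ∈ K
      · exact isMinOn_iff.1 hz₁min z hzK
      · have hq := hQne z (ne_of_gt hz)
        by_cases h1 : ‖z‖ ≤ R₁
        · by_cases h2 : c ≤ z.im
          · have hFpos : ¬ Fq z ≤ 0 := fun hF => hzK (by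
              rw [hK]
              exact ⟨by rw [Metric.mem_closedBall, dist_zero_right]; exact h1, h2, hF⟩)
            have h3 : ¬ (mt z).im ≤ -(a/2) := fun hh => hFpos ((hiff z hq).1 hh)
            push_neg at h3
            linarith
          · push_neg at h2
            have h4 := hlow z hz
            have h5 : -(l₀ * z.im) > -(l₀ * c) := by
              apply neg_lt_neg
              exact mul_lt_mul_of_pos_left h2 hl0pos
            have h6 : l₀ * c = a / 2 := by
              rw [hc]
              field_simp
            nlinarith [ha0, hmin₀, h4, h5, h6]
        · push_neg at h1
          have h7 := hfar z (le_of_lt h1)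
          have h8 : -(a/4) < (mt z).im := (abs_lt.1 h7).1
          linarith
    have hUnh : {z : ℂ | 0 < z.im} ∈ nhds z₁ :=
      (isOpen_lt continuous_const Complex.continuous_im).mem_nhds hz₁pos
    have hopenq : IsOpen {z : ℂ | aeval z q ≠ 0} :=
      IsOpen.preimage (aux_cont q) isOpen_ne
    have hA : AnalyticAt ℂ mt z₁ := by
      rw [hmt]
      apply DifferentiableOn.analyticAt (s := {z : ℂ | aeval z q ≠ 0})
      · intro z hzm
        exact (((aux_diff q') z).div ((aux_diff q) z) hzm).differentiableWithinAt
      · exact hopenq.mem_nhds (hQne z₁ (ne_of_gt hz₁pos))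
    have hev := aux_min hUnh hA (fun z hz => hglob z hz)
    have hAOn : AnalyticOnNhd ℂ mt {z : ℂ | 0 < z.im} := by
      rw [hmt]
      intro z hzm
      apply DifferentiableOn.analyticAt (s := {z : ℂ | aeval z q ≠ 0})
      · intro w hwm
        exact (((aux_diff q') w).div ((aux_diff q) w) hwm).differentiableWithinAt
      · exact hopenq.mem_nhds (hQne z (ne_of_gt hzm))
    have hconstOn : Set.EqOn mt (fun _ => mt z₁) {z : ℂ | 0 < z.im} := by
      apply hAOn.eqOn_of_preconnected_of_eventuallyEq
        (fun z _ => analyticAt_const)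
        (convex_halfSpace_im_gt 0).isPreconnected hz₁pos
      exact hev
    obtain ⟨z₂, hz₂⟩ : ∃ w : ℂ, w = ((c : ℝ) : ℂ) * Complex.I := ⟨_, rfl⟩
    have hz₂im : z₂.im = c := by simp [hz₂]
    have hz₂U : (0:ℝ) < z₂.im := by rw [hz₂im]; exact hc0
    have h₂ := hconstOn (show z₂ ∈ {z : ℂ | 0 < z.im} from hz₂U)
    have h9 := hlow z₂ hz₂U
    rw [h₂] at h9
    have h10 : l₀ * z₂.im = a / 2 := by
      rw [hz₂im, hc]
      field_simp
    rw [h10] at h9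
    simp only at h9
    linarith
  -- assemble everything
  refine ⟨⟨hdiff0, him0, fun z _ => hsym0 z⟩, l₀, hl0pos, mt, ⟨?_, ?_, ?_⟩, ?_, ?_, ?_⟩
  · intro z hz
    rw [hmt]
    exact (((aux_diff q') z).div ((aux_diff q) z) (hQne z hz))
  · exact himmt
  · intro z _
    rw [hmt]
    simp only
    rw [Polynomial.aeval_conj, Polynomial.aeval_conj, ← map_div₀]
  · exact ⟨q, q', fun z _ => by rw [hmt]⟩
  · refine ⟨|L| + 1, R₀, fun z _ hR => ?_⟩
    have hd := hR₀ z (le_of_lt (by exact hR))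
    rw [dist_eq_norm] at hd
    have h1 : ‖mt z‖ ≤ ‖mt z - ((L : ℝ) : ℂ)‖ + ‖((L : ℝ) : ℂ)‖ := by
      calc ‖mt z‖ = ‖(mt z - ((L : ℝ) : ℂ)) + ((L : ℝ) : ℂ)‖ := by rw [sub_add_cancel]
        _ ≤ _ := norm_add_le _ _
    have h2 : ‖((L : ℝ) : ℂ)‖ = |L| := by rw [Complex.norm_real, Real.norm_eq_abs]
    linarith
  · intro z hz
    have := halg z (hQne z hz)
    rw [this]
    ring


end
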